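/- Let S be a convex subset of a real vector space and let g : S → ℝ be a nonnegative convex function on S. Then the function h(x) := (g(x))² is strictly convex on S if and only if g is not constant on any segment [a,b] ⊆ S with a ≠ b. -/

import Mathlib

open Set

/-- Lemma 3.1. -/
theorem stmt6 {Y : Type*} [AddCommGroup Y] [Module ℝ Y]
    (S : Set Y) (hS : Convex ℝ S) (g : Y → ℝ)
    (hg0 : ∀ x ∈ S, 0 ≤ g x) (hgconv : ConvexOn ℝ S g) :
    StrictConvexOn ℝ S (fun x => (g x) ^ 2) ↔
      ∀ a b : Y, a ≠ b → segment ℝ a b ⊆ S → ¬ ∃ c : ℝ, ∀ x ∈ segment ℝ a b, g x = c := by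
  constructor
  · rintro hsc a b hab hseg ⟨c, hc⟩
    have ha : a ∈ S := hseg (left_mem_segment ℝ a b)
    have hb : b ∈ S := hseg (right_mem_segment ℝ a b)
    have hmid : (1/2 : ℝ) • a + (1/2 : ℝ) • b ∈ segment ℝ a b :=
      ⟨1/2, 1/2, by norm_num, by norm_num, by norm_num, rfl⟩
    have h := hsc.2 ha hb hab (by norm_num : (0:ℝ) < 1/2) (by norm_num : (0:ℝ) < 1/2)
      (by norm_num)
    simp only [smul_eq_mul] at h
    rw [hc _ hmid, hc _ (left_mem_segment ℝ a b), hc _ (right_mem_segment ℝ a b)] at h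
    linarith
  · intro H
    refine ⟨hS, ?_⟩
    intro x hx y hy hxy t s ht hs hts
    obtain rfl : s = 1 - t := by linarith
    simp only [smul_eq_mul]
    have hz : t • x + (1 - t) • y ∈ S := hS hx hy ht.le hs.le hts
    have hgz : g (t • x + (1 - t) • y) ≤ t * g x + (1 - t) * g y :=
      hgconv.2 hx hy ht.le hs.le hts
    have hgx := hg0 x hx
    have hgy := hg0 y hy
    have hgzn := hg0 _ hz
    by_cases hgeq : g x = g y
    · have hgzc : g (t • x + (1 - t) • y) ≤ g x := by nlinarith
      rcases lt_or_eq_of_le hgzc with hlt | heq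
      · rw [← hgeq]
        nlinarith [pow_lt_pow_left₀ hlt hgzn (by norm_num : 2 ≠ 0)]
      · exfalso
        apply H x y hxy (hS.segment_subset hx hy)
        refine ⟨g x, ?_⟩
        rintro w ⟨u, v, hu, hv, huv, rfl⟩
        obtain rfl : v = 1 - u := by linarith
        have hu1 : u ≤ 1 := by linarith
        have hw : u • x + (1 - u) • y ∈ S := hS hx hy hu hv huv
        have hle : g (u • x + (1 - u) • y) ≤ g x := by
          have h2 := hgconv.2 hx hy hu hv huv
          simp only [smul_eq_mul] at h2
          rw [← hgeq] at h2
          nlinarith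
        have hge : g x ≤ g (u • x + (1 - u) • y) := by
          rcases le_or_gt t u with hcase | hcase
          · have hu0 : (0:ℝ) < u := lt_of_lt_of_le ht hcase
            have hu0' : u ≠ 0 := ne_of_gt hu0
            have hp : (0:ℝ) < t / u := div_pos ht hu0
            have hp1 : t / u ≤ 1 := by rw [div_le_one hu0]; exact hcase
            have key : (t / u) • (u • x + (1 - u) • y) + (1 - t / u) • y
                = t • x + (1 - t) • y := by
              match_scalars <;> field_simp <;> ring
            have hin := hgconv.2 hw hy hp.le (by linarith : (0:ℝ) ≤ 1 - t/u) (by ring)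
            rw [key] at hin
            simp only [smul_eq_mul] at hin
            rw [heq] at hin
            rw [hgeq] at hin
            nlinarith
          · have hu1' : u < 1 := lt_of_lt_of_le hcase (by linarith)
            have h1u : (1:ℝ) - u ≠ 0 := by intro h; nlinarith
            have hq : (0:ℝ) < (1 - t) / (1 - u) := div_pos (by linarith) (by linarith)
            have hpn : (0:ℝ) ≤ (t - u) / (1 - u) :=
              div_nonneg (by linarith) (by linarith)
            have key : ((t - u) / (1 - u)) • x + ((1 - t) / (1 - u)) • (u • x + (1 - u) • y)
                = t • x + (1 - t) • y := by
              match_scalars <;> field_simp <;> ring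
            have hin := hgconv.2 hx hw hpn hq.le (by field_simp; ring)
            rw [key] at hin
            simp only [smul_eq_mul] at hin
            rw [heq] at hin
            have hsum : (t - u) / (1 - u) + (1 - t) / (1 - u) = 1 := by
              field_simp; ring
            nlinarith [hsum, hq, hgx, hin]
        linarith
    · have h1 : (0:ℝ) < (g x - g y)^2 := by
        have : g x - g y ≠ 0 := sub_ne_zero.mpr hgeq
        positivity
      have hsq : (t * g x + (1 - t) * g y)^2 < t * (g x)^2 + (1 - t) * (g y)^2 := by
        nlinarith [mul_pos (mul_pos ht hs) h1]
      calc g (t • x + (1 - t) • y) ^ 2 ≤ (t * g x + (1 - t) * g y)^2 := by nlinarith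
        _ < t * (g x)^2 + (1 - t) * (g y)^2 := hsq
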